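/- For positive integers N, l with l < N, let â(ξ) be the mask of the pseudo spline of type II with order (N,l) and let b̂(ξ) = e^{-iξ} · conj(â(ξ+π)). Then for all real ξ, |b̂(ξ)| ≤ min{1, (∑_{j=0}^{l} C(N+l,j)) · |ξ|^{2N} / 2^{2N}}. -/

import Mathlib

open Real Finset Complex

noncomputable def pseudoMaskII (N l : ℕ) (ξ : ℝ) : ℝ :=
  Real.cos (ξ / 2) ^ (2 * N) *
    ∑ j ∈ Finset.range (l + 1), ((N - 1 + j).choose j : ℝ) * Real.sin (ξ / 2) ^ (2 * j)

lemma AB (N l : ℕ) (hN : 1 ≤ N) (c : ℝ) :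
    ∑ j ∈ Finset.range (l+1), ((N - 1 + j).choose j : ℝ) * c ^ j
      = ∑ j ∈ Finset.range (l+1), ((N + l).choose j : ℝ) * c ^ j * (1 - c) ^ (l - j) := by
  induction l with
  | zero => simp
  | succ l ih =>
    have key : (∑ j ∈ Finset.range (l+2), ((N + (l+1)).choose j : ℝ) * c ^ j * (1 - c) ^ (l + 1 - j))
        = (∑ j ∈ Finset.range (l+1), ((N + l).choose j : ℝ) * c ^ j * (1 - c) ^ (l - j))
          + ((N + l).choose (l+1) : ℝ) * c ^ (l+1) := by
      rw [Finset.sum_range_succ' (fun j => ((N + (l+1)).choose j : ℝ) * c ^ j * (1 - c) ^ (l + 1 - j)) (l+1)]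
      have e1 : ∀ j ∈ Finset.range (l+1),
          ((N + (l+1)).choose (j+1) : ℝ) * c ^ (j+1) * (1 - c) ^ (l + 1 - (j+1))
          = c * (((N + l).choose j : ℝ) * c ^ j * (1 - c) ^ (l - j))
            + ((N + l).choose (j+1) : ℝ) * c ^ (j+1) * (1 - c) ^ (l - j) := by
        intro j hj
        have h1 : N + (l+1) = (N + l) + 1 := by omega
        have h2 : l + 1 - (j+1) = l - j := by omega
        rw [h1, h2, Nat.choose_succ_succ']
        push_cast
        ring
      rw [Finset.sum_congr rfl e1, Finset.sum_add_distrib, ← Finset.mul_sum]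
      have e2 : (∑ j ∈ Finset.range (l+1), ((N + l).choose (j+1) : ℝ) * c ^ (j+1) * (1 - c) ^ (l - j))
          + ((N + (l+1)).choose 0 : ℝ) * c ^ 0 * (1 - c) ^ (l + 1 - 0)
          = (1 - c) * (∑ j ∈ Finset.range (l+1), ((N + l).choose j : ℝ) * c ^ j * (1 - c) ^ (l - j))
            + ((N + l).choose (l+1) : ℝ) * c ^ (l+1) := by
        have e3 : (∑ j ∈ Finset.range (l+2), ((N + l).choose j : ℝ) * c ^ j * (1 - c) ^ (l + 1 - j))
            = (∑ j ∈ Finset.range (l+1), ((N + l).choose (j+1) : ℝ) * c ^ (j+1) * (1 - c) ^ (l - j))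
              + ((N + (l+1)).choose 0 : ℝ) * c ^ 0 * (1 - c) ^ (l + 1 - 0) := by
          rw [Finset.sum_range_succ' (fun j => ((N + l).choose j : ℝ) * c ^ j * (1 - c) ^ (l + 1 - j)) (l+1)]
          simp only [Nat.choose_zero_right]
          congr 1
          refine Finset.sum_congr rfl fun j hj => ?_
          have : l + 1 - (j+1) = l - j := by omega
          rw [this]
        have e4 : (∑ j ∈ Finset.range (l+2), ((N + l).choose j : ℝ) * c ^ j * (1 - c) ^ (l + 1 - j))
            = (1 - c) * (∑ j ∈ Finset.range (l+1), ((N + l).choose j : ℝ) * c ^ j * (1 - c) ^ (l - j))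
              + ((N + l).choose (l+1) : ℝ) * c ^ (l+1) := by
          rw [Finset.sum_range_succ]
          simp only [Nat.sub_self]
          rw [Finset.mul_sum]
          congr 1
          · refine Finset.sum_congr rfl fun j hj => ?_
            have hjl : j ≤ l := by simpa [Nat.lt_succ_iff] using hj
            have : l + 1 - j = (l - j) + 1 := by omega
            rw [this]
            ring
          · simp
        rw [← e3, e4]
      rw [add_assoc, e2]
      ring
    rw [Finset.sum_range_succ, ih, key]
    have : N - 1 + (l+1) = N + l := by omega
    rw [this]

theorem highpass_mask_upper_bound (N l : ℕ) (hl : 0 < l) (hlN : l < N) (ξ : ℝ) :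
    ‖Complex.exp (-Complex.I * ξ) * (starRingEnd ℂ) ((pseudoMaskII N l (ξ + π) : ℂ))‖ ≤
      min 1 ((∑ j ∈ Finset.range (l + 1), ((N + l).choose j : ℝ)) * |ξ| ^ (2 * N) / 2 ^ (2 * N)) := by
  have hN : 1 ≤ N := le_of_lt (lt_of_le_of_lt (Nat.succ_le_of_lt hl) hlN)
  set s : ℝ := Real.sin (ξ/2) ^ 2 with hs_def
  set c : ℝ := Real.cos (ξ/2) ^ 2 with hc_def
  have hs0 : 0 ≤ s := sq_nonneg _
  have hc0 : 0 ≤ c := sq_nonneg _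
  have hsc : s + c = 1 := Real.sin_sq_add_cos_sq _
  have hc1 : c ≤ 1 := by nlinarith
  -- rewrite the mask at ξ + π
  have hcos : Real.cos ((ξ + π) / 2) = - Real.sin (ξ/2) := by
    have h : (ξ + π)/2 = ξ/2 + π/2 := by ring
    rw [h, Real.cos_add_pi_div_two]
  have hsin : Real.sin ((ξ + π) / 2) = Real.cos (ξ/2) := by
    have h : (ξ + π)/2 = ξ/2 + π/2 := by ring
    rw [h, Real.sin_add_pi_div_two]
  have hmask : pseudoMaskII N l (ξ + π)
      = s ^ N * ∑ j ∈ Finset.range (l+1), ((N - 1 + j).choose j : ℝ) * c ^ j := by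
    unfold pseudoMaskII
    rw [hcos, hsin]
    congr 1
    · rw [pow_mul, neg_sq]
    · refine Finset.sum_congr rfl fun j hj => ?_
      rw [pow_mul]
  have hA0 : 0 ≤ ∑ j ∈ Finset.range (l+1), ((N - 1 + j).choose j : ℝ) * c ^ j := by
    refine Finset.sum_nonneg fun j hj => ?_
    positivity
  have hmask0 : 0 ≤ pseudoMaskII N l (ξ + π) := by
    rw [hmask]; positivity
  -- norm simplification
  have hnorm : ‖Complex.exp (-Complex.I * ξ) * (starRingEnd ℂ) ((pseudoMaskII N l (ξ + π) : ℂ))‖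
      = pseudoMaskII N l (ξ + π) := by
    rw [norm_mul]
    simp [Complex.norm_exp, _root_.abs_of_nonneg hmask0]
  rw [hnorm]
  refine le_min ?_ ?_
  · -- bound by 1
    rw [hmask, AB N l hN c]
    have h1c : 1 - c = s := by linarith
    rw [h1c, Finset.mul_sum]
    have step : (∑ j ∈ Finset.range (l+1), s ^ N * (((N + l).choose j : ℝ) * c ^ j * s ^ (l - j)))
        = ∑ j ∈ Finset.range (l+1), c ^ j * s ^ (N + l - j) * ((N + l).choose j : ℝ) := by
      refine Finset.sum_congr rfl fun j hj => ?_
      have hjl : j ≤ l := by simpa [Nat.lt_succ_iff] using hj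
      have : N + l - j = N + (l - j) := by omega
      rw [this, pow_add]
      ring
    rw [step]
    have hsub : Finset.range (l+1) ⊆ Finset.range (N + l + 1) := by
      apply Finset.range_subset_range.2; omega
    have hle : (∑ j ∈ Finset.range (l+1), c ^ j * s ^ (N + l - j) * ((N + l).choose j : ℝ))
        ≤ ∑ j ∈ Finset.range (N + l + 1), c ^ j * s ^ (N + l - j) * ((N + l).choose j : ℝ) := by
      refine Finset.sum_le_sum_of_subset_of_nonneg hsub fun j _ _ => ?_
      positivity
    have hap : (∑ j ∈ Finset.range (N + l + 1), c ^ j * s ^ (N + l - j) * ((N + l).choose j : ℝ))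
        = (c + s) ^ (N + l) := (add_pow c s (N + l)).symm
    have : c + s = 1 := by linarith
    rw [hap, this, one_pow] at hle
    exact hle
  · -- bound by the second term
    rw [hmask]
    have hA : (∑ j ∈ Finset.range (l+1), ((N - 1 + j).choose j : ℝ) * c ^ j)
        ≤ ∑ j ∈ Finset.range (l+1), ((N + l).choose j : ℝ) := by
      refine Finset.sum_le_sum fun j hj => ?_
      have hjl : j ≤ l := by simpa [Nat.lt_succ_iff] using hj
      have h1 : ((N - 1 + j).choose j : ℝ) ≤ ((N + l).choose j : ℝ) := by
        exact_mod_cast Nat.choose_le_choose j (by omega)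
      have h2 : c ^ j ≤ 1 := pow_le_one₀ hc0 hc1
      calc ((N - 1 + j).choose j : ℝ) * c ^ j ≤ ((N + l).choose j : ℝ) * 1 := by
            apply mul_le_mul h1 h2 (by positivity) (by positivity)
        _ = ((N + l).choose j : ℝ) := mul_one _
    have hsle : s ≤ (ξ/2) ^ 2 := Real.sin_sq_le_sq
    have hpow : s ^ N ≤ ((ξ/2)^2) ^ N := pow_le_pow_left₀ hs0 hsle N
    have heq : (((ξ/2)^2 : ℝ)) ^ N = |ξ| ^ (2*N) / 2 ^ (2*N) := by
      have h1 : |ξ| ^ (2*N) = ξ ^ (2*N) := by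
        rw [pow_abs, _root_.abs_of_nonneg]
        rw [pow_mul]; positivity
      rw [h1, ← pow_mul, div_pow]
    have hSC0 : (0:ℝ) ≤ ∑ j ∈ Finset.range (l+1), ((N + l).choose j : ℝ) := by
      refine Finset.sum_nonneg fun j hj => ?_; positivity
    calc s ^ N * (∑ j ∈ Finset.range (l+1), ((N - 1 + j).choose j : ℝ) * c ^ j)
        ≤ ((ξ/2)^2) ^ N * (∑ j ∈ Finset.range (l+1), ((N + l).choose j : ℝ)) := by
          apply mul_le_mul hpow hA hA0 (by positivity)
      _ = (∑ j ∈ Finset.range (l+1), ((N + l).choose j : ℝ)) * |ξ| ^ (2*N) / 2 ^ (2*N) := by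
          rw [heq]; ring
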